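/- Completeness of JD_CS with respect to finitary models: for every axiomatically appropriate constant specification CS for JD and every formula A, if A is not derivable in the Hilbert system JD_CS then there exists a finitary Fitting model M for JD_CS and a world w in M such that M,w ⊮ A. -/

import Mathlib

namespace JustificationLogic

/-- Justification terms: constants, variables, application, sum, and proof checker `!`. -/
inductive Term : Type
  | const : ℕ → Term
  | var : ℕ → Term
  | app : Term → Term → Term
  | sum : Term → Term → Term
  | bang : Term → Term
  deriving DecidableEq

/-- Formulas of justification logic: atoms, negation, implication, and `t : A`. -/
inductive Formula : Type
  | atom : ℕ → Formula
  | neg : Formula → Formula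
  | impl : Formula → Formula → Formula
  | just : Term → Formula → Formula
  deriving DecidableEq

/-- Disjunction, defined classically: `A ∨ B := ¬A → B`. -/
def Formula.or (A B : Formula) : Formula := (Formula.neg A).impl B

/-- Falsum, defined as the negation of a propositional tautology. -/
def Formula.falsum : Formula := Formula.neg ((Formula.atom 0).impl (Formula.atom 0))

/-- Number of symbols of a term. -/
def Term.size : Term → ℕ
  | .const _ => 1
  | .var _ => 1
  | .app s t => s.size + t.size + 1
  | .sum s t => s.size + t.size + 1
  | .bang t => t.size + 1

/-- Number of symbols of a formula. -/
def Formula.size : Formula → ℕ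
  | .atom _ => 1
  | .neg A => A.size + 1
  | .impl A B => A.size + B.size + 1
  | .just t A => t.size + A.size + 1

/-- An explicit numerical code for terms (an injective Gödel numbering). -/
def Term.code : Term → ℕ
  | .const n => Nat.pair 0 n
  | .var n => Nat.pair 1 n
  | .app s t => Nat.pair 2 (Nat.pair s.code t.code)
  | .sum s t => Nat.pair 3 (Nat.pair s.code t.code)
  | .bang t => Nat.pair 4 t.code

/-- An explicit numerical code for formulas (an injective Gödel numbering). -/
def Formula.code : Formula → ℕ
  | .atom n => Nat.pair 0 n
  | .neg A => Nat.pair 1 A.code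
  | .impl A B => Nat.pair 2 (Nat.pair A.code B.code)
  | .just t A => Nat.pair 3 (Nat.pair t.code A.code)

/-- Substitution of terms for term variables. -/
def Term.subst (σ : ℕ → Term) : Term → Term
  | .const n => .const n
  | .var n => σ n
  | .app s t => .app (s.subst σ) (t.subst σ)
  | .sum s t => .sum (s.subst σ) (t.subst σ)
  | .bang t => .bang (t.subst σ)

/-- Simultaneous substitution of terms for term variables and formulas for atoms. -/
def Formula.subst (σ : ℕ → Term) (τ : ℕ → Formula) : Formula → Formula
  | .atom n => τ n
  | .neg A => .neg (A.subst σ τ)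
  | .impl A B => .impl (A.subst σ τ) (B.subst σ τ)
  | .just t A => .just (t.subst σ) (A.subst σ τ)

/-- `towerT c n = !ⁿc`. -/
def towerT (c : Term) : ℕ → Term
  | 0 => c
  | n + 1 => Term.bang (towerT c n)

/-- `towerF c A n = !ⁿ⁻¹c : ⋯ : !c : c : A` (and `A` for `n = 0`), so that
`(towerT c n) : (towerF c A n)` is the `n`-th formula produced by the rule (AN!). -/
def towerF (c : Term) (A : Formula) : ℕ → Formula
  | 0 => A
  | n + 1 => Formula.just (towerT c n) (towerF c A n)

/-- The axioms of the justification logics considered, with switches `hd`, `ht`, `h4`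
for the axioms (jd), (jt), (j4).  The propositional part (A1) is given by three
standard Hilbert-style schemes axiomatizing classical propositional logic. -/
inductive Ax (hd ht h4 : Bool) : Formula → Prop
  | k (A B : Formula) : Ax hd ht h4 (A.impl (B.impl A))
  | s (A B C : Formula) :
      Ax hd ht h4 ((A.impl (B.impl C)).impl ((A.impl B).impl (A.impl C)))
  | dn (A B : Formula) :
      Ax hd ht h4 (((A.neg).impl (B.neg)).impl (B.impl A))
  | a2 (t s : Term) (A B : Formula) :
      Ax hd ht h4 ((Formula.just t (A.impl B)).impl
        ((Formula.just s A).impl (Formula.just (Term.app t s) B)))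
  | a3 (t s : Term) (A : Formula) :
      Ax hd ht h4 (((Formula.just t A).or (Formula.just s A)).impl
        (Formula.just (Term.sum t s) A))
  | jd (t : Term) : hd = true →
      Ax hd ht h4 ((Formula.just t Formula.falsum).impl Formula.falsum)
  | jt (t : Term) (A : Formula) : ht = true →
      Ax hd ht h4 ((Formula.just t A).impl A)
  | j4 (t : Term) (A : Formula) : h4 = true →
      Ax hd ht h4 ((Formula.just t A).impl
        (Formula.just (Term.bang t) (Formula.just t A)))

/-- Axioms of the respective logics. -/
def AxJ : Formula → Prop := Ax false false false
def AxJT : Formula → Prop := Ax false true false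
def AxJD : Formula → Prop := Ax true false false
def AxJ4 : Formula → Prop := Ax false false true
def AxJD4 : Formula → Prop := Ax true false true
def AxLP : Formula → Prop := Ax false true true

/-- `CS` is a constant specification for the logic with axioms `Axm`:
every member of `CS` is of the form `c : A` with `c` a constant and `A` an axiom. -/
def ConstSpec (Axm : Formula → Prop) (CS : Set Formula) : Prop :=
  ∀ F ∈ CS, ∃ (c : ℕ) (A : Formula), F = Formula.just (Term.const c) A ∧ Axm A

/-- `CS` is axiomatically appropriate for axioms `Axm`:
for every axiom `A` there is a constant `c` with `c : A ∈ CS`. -/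
def AxApprop (Axm : Formula → Prop) (CS : Set Formula) : Prop :=
  ∀ A : Formula, Axm A → ∃ c : ℕ, Formula.just (Term.const c) A ∈ CS

/-- `CS` is schematic: the set of axioms justified by a given constant consists of
axiom schemes, i.e. it is closed under simultaneous substitution of terms for term
variables and formulas for atomic propositions. -/
def Schematic (CS : Set Formula) : Prop :=
  ∀ (c : ℕ) (A : Formula), Formula.just (Term.const c) A ∈ CS →
    ∀ (σ : ℕ → Term) (τ : ℕ → Formula),
      Formula.just (Term.const c) (A.subst σ τ) ∈ CS

/-- `CS` is decidable: some computable function decides membership in `CS`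
(via the explicit Gödel numbering of formulas). -/
def DecidableCS (CS : Set Formula) : Prop :=
  ∃ C : ℕ → Bool, Computable C ∧ ∀ F : Formula, F ∈ CS ↔ C F.code = true

/-- Hilbert-style derivability with the iterated axiom necessitation rule (AN!):
from `c : A ∈ CS` infer `!ⁿc : !ⁿ⁻¹c : ⋯ : !c : c : A` for every `n ≥ 0`. -/
inductive DerivB (Axm : Formula → Prop) (CS : Set Formula) : Formula → Prop
  | ax {A : Formula} : Axm A → DerivB Axm CS A
  | mp {A B : Formula} : DerivB Axm CS (A.impl B) → DerivB Axm CS A → DerivB Axm CS B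
  | an (c : ℕ) (A : Formula) (n : ℕ) :
      Formula.just (Term.const c) A ∈ CS →
      DerivB Axm CS (Formula.just (towerT (Term.const c) n) (towerF (Term.const c) A n))

/-- Hilbert-style derivability with the simple axiom necessitation rule (AN):
from `c : A ∈ CS` infer `c : A`. -/
inductive DerivS (Axm : Formula → Prop) (CS : Set Formula) : Formula → Prop
  | ax {A : Formula} : Axm A → DerivS Axm CS A
  | mp {A B : Formula} : DerivS Axm CS (A.impl B) → DerivS Axm CS A → DerivS Axm CS B
  | an (c : ℕ) (A : Formula) :
      Formula.just (Term.const c) A ∈ CS →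
      DerivS Axm CS (Formula.just (Term.const c) A)

/-- A structure for Fitting models: a nonempty set of worlds, an accessibility
relation, an evidence relation and a valuation. -/
structure Model : Type 1 where
  World : Type
  nonempty : Nonempty World
  R : World → World → Prop
  E : Term → Formula → World → Prop
  val : ℕ → World → Prop

/-- The satisfaction relation `M, w ⊩ A`. -/
def Sat (M : Model) : Formula → M.World → Prop
  | .atom n, w => M.val n w
  | .neg A, w => ¬ Sat M A w
  | .impl A B, w => Sat M A w → Sat M B w
  | .just t A, w => M.E t A w ∧ ∀ v : M.World, M.R w v → Sat M A v

/-- The evidence relation of a model, as a set of triples. -/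
def EvSet (M : Model) : Set (Term × Formula × M.World) :=
  {x | M.E x.1 x.2.1 x.2.2}

/-- The graph of the valuation: the set `{(w, p) | w ∈ ν(p)}`. -/
def ValSet (M : Model) : Set (M.World × ℕ) :=
  {p | M.val p.2 p.1}

/-- Seriality of a relation: every world has a successor. -/
def Serial {W : Type} (R : W → W → Prop) : Prop := ∀ w : W, ∃ v : W, R w v

/-- Admissible evidence relation for the logics without the (j4) axiom:
closure under sum and application, and the constant specification condition
with iterated `!`. -/
def AdmissibleBang (CS : Set Formula) {W : Type}
    (E : Set (Term × Formula × W)) : Prop :=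
  (∀ (s t : Term) (A : Formula) (w : W),
      ((s, A, w) ∈ E ∨ (t, A, w) ∈ E) → (Term.sum s t, A, w) ∈ E) ∧
  (∀ (s t : Term) (A B : Formula) (w : W),
      (s, A.impl B, w) ∈ E → (t, A, w) ∈ E → (Term.app s t, B, w) ∈ E) ∧
  (∀ (c : ℕ) (A : Formula) (w : W) (n : ℕ),
      Formula.just (Term.const c) A ∈ CS →
      (towerT (Term.const c) n, towerF (Term.const c) A n, w) ∈ E)

/-- Admissible evidence relation for the logics with the (j4) axiom:
closure under sum and application, the simple constant specification condition,
closure under `!`, and monotonicity along the accessibility relation. -/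
def AdmissibleJ4 (CS : Set Formula) {W : Type} (R : W → W → Prop)
    (E : Set (Term × Formula × W)) : Prop :=
  (∀ (s t : Term) (A : Formula) (w : W),
      ((s, A, w) ∈ E ∨ (t, A, w) ∈ E) → (Term.sum s t, A, w) ∈ E) ∧
  (∀ (s t : Term) (A B : Formula) (w : W),
      (s, A.impl B, w) ∈ E → (t, A, w) ∈ E → (Term.app s t, B, w) ∈ E) ∧
  (∀ (c : ℕ) (A : Formula) (w : W),
      Formula.just (Term.const c) A ∈ CS → (Term.const c, A, w) ∈ E) ∧
  (∀ (t : Term) (A : Formula) (w : W),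
      (t, A, w) ∈ E → (Term.bang t, Formula.just t A, w) ∈ E) ∧
  (∀ (t : Term) (A : Formula) (w v : W),
      (t, A, w) ∈ E → R w v → (t, A, v) ∈ E)

/-- `M` is a Fitting model for `J_CS`. -/
def IsModelJ (CS : Set Formula) (M : Model) : Prop :=
  AdmissibleBang CS (EvSet M)

/-- `M` is a Fitting model for `JT_CS`: additionally `R` is reflexive. -/
def IsModelJT (CS : Set Formula) (M : Model) : Prop :=
  Reflexive M.R ∧ AdmissibleBang CS (EvSet M)

/-- `M` is a Fitting model for `JD_CS`: additionally `R` is serial. -/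
def IsModelJD (CS : Set Formula) (M : Model) : Prop :=
  Serial M.R ∧ AdmissibleBang CS (EvSet M)

/-- `M` is a Fitting model for `J4_CS`: `R` is transitive. -/
def IsModelJ4 (CS : Set Formula) (M : Model) : Prop :=
  Transitive M.R ∧ AdmissibleJ4 CS M.R (EvSet M)

/-- `M` is a Fitting model for `JD4_CS`: `R` is serial and transitive. -/
def IsModelJD4 (CS : Set Formula) (M : Model) : Prop :=
  Serial M.R ∧ Transitive M.R ∧ AdmissibleJ4 CS M.R (EvSet M)

/-- `M` is a Fitting model for `LP_CS`: `R` is reflexive and transitive. -/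
def IsModelLP (CS : Set Formula) (M : Model) : Prop :=
  Reflexive M.R ∧ Transitive M.R ∧ AdmissibleJ4 CS M.R (EvSet M)

/-- `B` is a base for the evidence relation of `M`, and that evidence relation is
minimal (least) among the admissible ones (non-(j4) version) containing `B`. -/
def MinBaseBang (CS : Set Formula) (M : Model)
    (B : Set (Term × Formula × M.World)) : Prop :=
  B ⊆ EvSet M ∧
  ∀ E' : Set (Term × Formula × M.World),
    AdmissibleBang CS E' → B ⊆ E' → EvSet M ⊆ E'

/-- `B` is a base for the evidence relation of `M`, and that evidence relation is
minimal (least) among the admissible ones ((j4) version) containing `B`. -/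
def MinBaseJ4 (CS : Set Formula) (M : Model)
    (B : Set (Term × Formula × M.World)) : Prop :=
  B ⊆ EvSet M ∧
  ∀ E' : Set (Term × Formula × M.World),
    AdmissibleJ4 CS M.R E' → B ⊆ E' → EvSet M ⊆ E'

/-- `M` is finitary (non-(j4) version): finitely many worlds, the evidence relation
is the minimal admissible one over some finite base, and the valuation has finite graph. -/
def FinitaryBang (CS : Set Formula) (M : Model) : Prop :=
  Finite M.World ∧
  (∃ B : Set (Term × Formula × M.World), B.Finite ∧ MinBaseBang CS M B) ∧
  (ValSet M).Finite

/-- `M` is finitary ((j4) version): finitely many worlds, the evidence relation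
is the minimal admissible one over some finite base, and the valuation has finite graph. -/
def FinitaryJ4 (CS : Set Formula) (M : Model) : Prop :=
  Finite M.World ∧
  (∃ B : Set (Term × Formula × M.World), B.Finite ∧ MinBaseJ4 CS M B) ∧
  (ValSet M).Finite

/-! ### Auxiliary development for finitary completeness of JD -/

/-- Derivability from a set of hypotheses: hypotheses are treated as extra axioms. -/
abbrev DC (CS : Set Formula) (Γ : Set Formula) (A : Formula) : Prop :=
  DerivB (fun F => AxJD F ∨ F ∈ Γ) CS A

theorem DC.hyp {CS Γ : Set Formula} {A : Formula} (h : A ∈ Γ) : DC CS Γ A :=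
  DerivB.ax (Or.inr h)

theorem DC.ax' {CS Γ : Set Formula} {A : Formula} (h : AxJD A) : DC CS Γ A :=
  DerivB.ax (Or.inl h)

theorem DC.mp' {CS Γ : Set Formula} {A B : Formula}
    (h1 : DC CS Γ (A.impl B)) (h2 : DC CS Γ A) : DC CS Γ B :=
  DerivB.mp h1 h2

theorem DC.mono {CS Γ Δ : Set Formula} {A : Formula} (hs : Γ ⊆ Δ) (h : DC CS Γ A) :
    DC CS Δ A := by
  induction h with
  | ax h =>
    rcases h with h | h
    · exact DC.ax' h
    · exact DC.hyp (hs h)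
  | mp _ _ ih1 ih2 => exact ih1.mp' ih2
  | an c B n hc => exact DerivB.an c B n hc

theorem derivB_of_DC {CS : Set Formula} {A : Formula} (h : DC CS ∅ A) : DerivB AxJD CS A := by
  induction h with
  | ax h =>
    rcases h with h | h
    · exact DerivB.ax h
    · cases h
  | mp _ _ ih1 ih2 => exact DerivB.mp ih1 ih2
  | an c B n hc => exact DerivB.an c B n hc

theorem DC.ofDerivB {CS Γ : Set Formula} {A : Formula} (h : DerivB AxJD CS A) : DC CS Γ A := by
  induction h with
  | ax h => exact DC.ax' h
  | mp _ _ ih1 ih2 => exact ih1.mp' ih2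
  | an c B n hc => exact DerivB.an c B n hc

theorem DC.id {CS Γ : Set Formula} (A : Formula) : DC CS Γ (A.impl A) :=
  ((DC.ax' (Ax.s A (A.impl A) A)).mp' (DC.ax' (Ax.k A (A.impl A)))).mp' (DC.ax' (Ax.k A A))

theorem DC.deduction {CS Γ : Set Formula} {A B : Formula}
    (h : DC CS (insert A Γ) B) : DC CS Γ (A.impl B) := by
  induction h with
  | ax h =>
    rcases h with h | h
    · exact (DC.ax' (Ax.k _ A)).mp' (DC.ax' h)
    · rcases Set.mem_insert_iff.mp h with rfl | h
      · exact DC.id _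
      · exact (DC.ax' (Ax.k _ A)).mp' (DC.hyp h)
  | mp _ _ ih1 ih2 => exact ((DC.ax' (Ax.s A _ _)).mp' ih1).mp' ih2
  | an c B' n hc => exact (DC.ax' (Ax.k _ A)).mp' (DerivB.an c B' n hc)

theorem DC.exfalso' {CS Γ : Set Formula} {X C : Formula}
    (h1 : DC CS Γ X) (h2 : DC CS Γ X.neg) : DC CS Γ C := by
  have k : DC CS Γ (C.neg.impl X.neg) := (DC.ax' (Ax.k X.neg C.neg)).mp' h2
  exact ((DC.ax' (Ax.dn C X)).mp' k).mp' h1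

theorem DC.ofNegImpFal {CS Γ : Set Formula} {B : Formula}
    (h : DC CS Γ (B.neg.impl Formula.falsum)) : DC CS Γ B :=
  ((DC.ax' (Ax.dn B ((Formula.atom 0).impl (Formula.atom 0)))).mp' h).mp' (DC.id _)

theorem DC.orL {CS Γ : Set Formula} {X Y : Formula} (h : DC CS Γ X) : DC CS Γ (X.or Y) :=
  DC.deduction (DC.exfalso' (h.mono (Set.subset_insert _ _)) (DC.hyp (Set.mem_insert _ _)))

theorem DC.orR {CS Γ : Set Formula} {X Y : Formula} (h : DC CS Γ Y) : DC CS Γ (X.or Y) :=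
  (DC.ax' (Ax.k Y X.neg)).mp' h

/-- Consistency. -/
def Con (CS Γ : Set Formula) : Prop := ¬ DC CS Γ Formula.falsum

theorem DC.compact {CS Γ : Set Formula} {A : Formula} (h : DC CS Γ A) :
    ∃ Γ0 : Set Formula, Γ0.Finite ∧ Γ0 ⊆ Γ ∧ DC CS Γ0 A := by
  induction h with
  | ax h =>
    rcases h with h | h
    · exact ⟨∅, Set.finite_empty, Set.empty_subset _, DC.ax' h⟩
    · exact ⟨{_}, Set.finite_singleton _, Set.singleton_subset_iff.mpr h,
        DC.hyp (Set.mem_singleton _)⟩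
  | mp _ _ ih1 ih2 =>
    obtain ⟨G1, f1, s1, d1⟩ := ih1
    obtain ⟨G2, f2, s2, d2⟩ := ih2
    exact ⟨G1 ∪ G2, f1.union f2, Set.union_subset s1 s2,
      (d1.mono Set.subset_union_left).mp' (d2.mono Set.subset_union_right)⟩
  | an c B n hc => exact ⟨∅, Set.finite_empty, Set.empty_subset _, DerivB.an c B n hc⟩

/-- Maximal consistent sets. -/
def MCS (CS Γ : Set Formula) : Prop := Con CS Γ ∧ ∀ B, B ∉ Γ → ¬ Con CS (insert B Γ)

theorem finite_subset_chain {c : Set (Set Formula)} (hchain : IsChain (· ⊆ ·) c)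
    (hne : c.Nonempty) {t : Set Formula} (ht : t.Finite) :
    t ⊆ ⋃₀ c → ∃ u ∈ c, t ⊆ u := by
  classical
  refine Set.Finite.induction_on t ht ?_ ?_
  · intro _
    exact ⟨hne.choose, hne.choose_spec, Set.empty_subset _⟩
  · intro a s _ _ ih hsub
    obtain ⟨u1, hu1, hau1⟩ : ∃ u ∈ c, a ∈ u := hsub (Set.mem_insert a s)
    obtain ⟨u2, hu2, hsu2⟩ := ih (fun x hx => hsub (Set.mem_insert_of_mem _ hx))
    rcases eq_or_ne u1 u2 with rfl | hne12
    · exact ⟨u1, hu1, Set.insert_subset hau1 hsu2⟩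
    rcases hchain hu1 hu2 hne12 with hle | hle
    · exact ⟨u2, hu2, Set.insert_subset (hle hau1) hsu2⟩
    · exact ⟨u1, hu1, Set.insert_subset hau1 (hsu2.trans hle)⟩

theorem lindenbaum {CS Γ : Set Formula} (h : Con CS Γ) : ∃ Δ, Γ ⊆ Δ ∧ MCS CS Δ := by
  have H : ∀ c ⊆ {T : Set Formula | Con CS T}, IsChain (· ⊆ ·) c → c.Nonempty →
      ∃ ub ∈ {T : Set Formula | Con CS T}, ∀ s ∈ c, s ⊆ ub := by
    intro c hc hchain hne
    refine ⟨⋃₀ c, ?_, fun s hs => Set.subset_sUnion_of_mem hs⟩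
    intro hd
    obtain ⟨Γ0, hfin, hsub, hd0⟩ := hd.compact
    obtain ⟨u, hu, hΓ0u⟩ := finite_subset_chain hchain hne hfin hsub
    exact hc hu (hd0.mono hΓ0u)
  obtain ⟨m, hsub, hmS, hmax⟩ := zorn_subset_nonempty {T : Set Formula | Con CS T} H Γ h
  refine ⟨m, hsub, hmS, ?_⟩
  intro B hB hcon
  have : insert B m ⊆ m := hmax hcon (Set.subset_insert _ _)
  exact hB (this (Set.mem_insert _ _))

theorem MCS.memDeriv {CS Γ : Set Formula} (h : MCS CS Γ) {B : Formula}
    (hd : DC CS Γ B) : B ∈ Γ := by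
  by_contra hB
  have hfal := not_not.mp (h.2 B hB)
  exact h.1 (hfal.deduction.mp' hd)

theorem MCS.neg_mem {CS Γ : Set Formula} (h : MCS CS Γ) (B : Formula) :
    B.neg ∈ Γ ↔ B ∉ Γ := by
  constructor
  · intro hn hB
    exact h.1 (DC.exfalso' (DC.hyp hB) (DC.hyp hn))
  · intro hB
    by_contra hn
    have hfal := not_not.mp (h.2 _ hn)
    exact hB (h.memDeriv (DC.ofNegImpFal hfal.deduction))

theorem MCS.impl_mem {CS Γ : Set Formula} (h : MCS CS Γ) (X Y : Formula) :
    X.impl Y ∈ Γ ↔ (X ∈ Γ → Y ∈ Γ) := by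
  constructor
  · intro hi hX
    exact h.memDeriv ((DC.hyp hi).mp' (DC.hyp hX))
  · intro hi
    by_cases hX : X ∈ Γ
    · exact h.memDeriv ((DC.ax' (Ax.k Y X)).mp' (DC.hyp (hi hX)))
    · have hn : X.neg ∈ Γ := (h.neg_mem X).mpr hX
      have k : DC CS Γ (Y.neg.impl X.neg) := (DC.ax' (Ax.k X.neg Y.neg)).mp' (DC.hyp hn)
      exact h.memDeriv ((DC.ax' (Ax.dn Y X)).mp' k)

/-- Internalization (constructive necessitation). -/
theorem internalize {CS : Set Formula} (hApp : AxApprop AxJD CS) {F : Formula}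
    (h : DerivB AxJD CS F) : ∃ t, DerivB AxJD CS (Formula.just t F) := by
  induction h with
  | ax h =>
    obtain ⟨c, hc⟩ := hApp _ h
    exact ⟨Term.const c, DerivB.an c _ 0 hc⟩
  | @mp X Y _ _ ih1 ih2 =>
    obtain ⟨t, ht⟩ := ih1
    obtain ⟨s, hs⟩ := ih2
    exact ⟨Term.app t s, DerivB.mp (DerivB.mp (DerivB.ax (Ax.a2 t s X Y)) ht) hs⟩
  | an c B n hc => exact ⟨towerT (Term.const c) (n + 1), DerivB.an c B (n + 1) hc⟩

/-- Folded implication `B1 → (B2 → ⋯ → F)` (innermost first). -/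
def impList (l : List Formula) (F : Formula) : Formula :=
  l.foldl (fun acc b => Formula.impl b acc) F

theorem DC.impList_intro {CS Γ : Set Formula} :
    ∀ (l : List Formula) (F : Formula),
      DC CS (Γ ∪ {x | x ∈ l}) F → DC CS Γ (impList l F)
  | [], F, h => h.mono (by simp)
  | B :: l, F, h => by
    have h1 : DC CS (insert B (Γ ∪ {x | x ∈ l})) F := by
      refine h.mono ?_
      intro x hx
      simp only [Set.mem_union, Set.mem_setOf_eq, List.mem_cons] at hx
      simp only [Set.mem_insert_iff, Set.mem_union, Set.mem_setOf_eq]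
      tauto
    exact DC.impList_intro l (B.impl F) h1.deduction

theorem MCS.peel {CS Γ : Set Formula} (hM : MCS CS Γ) :
    ∀ (l : List Formula), (∀ B ∈ l, ∃ u, Formula.just u B ∈ Γ) →
      ∀ (F : Formula) (s : Term), Formula.just s (impList l F) ∈ Γ →
        ∃ s', Formula.just s' F ∈ Γ
  | [], _, F, s, h => ⟨s, h⟩
  | B :: l, hl, F, s, h => by
    obtain ⟨s', hs'⟩ :=
      hM.peel l (fun b hb => hl b (List.mem_cons_of_mem _ hb)) (B.impl F) s h
    obtain ⟨u, hu⟩ := hl B List.mem_cons_self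
    exact ⟨Term.app s' u,
      hM.memDeriv (((DC.ax' (Ax.a2 s' u B F)).mp' (DC.hyp hs')).mp' (DC.hyp hu))⟩

/-- The set of formulas justified at a world. -/
def sharp (Γ : Set Formula) : Set Formula := {B | ∃ t, Formula.just t B ∈ Γ}

theorem sharp_con {CS Γ : Set Formula} (hApp : AxApprop AxJD CS) (hM : MCS CS Γ) :
    Con CS (sharp Γ) := by
  intro hd
  obtain ⟨Γ0, hfin, hsub, hd0⟩ := hd.compact
  set l := hfin.toFinset.toList with hl
  have hmem : ∀ x, x ∈ l ↔ x ∈ Γ0 := by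
    intro x
    simp [hl, Set.Finite.mem_toFinset]
  have hd1 : DC CS (∅ ∪ {x | x ∈ l}) Formula.falsum := by
    refine hd0.mono ?_
    intro x hx
    exact Or.inr ((hmem x).mpr hx)
  have hd2 : DerivB AxJD CS (impList l Formula.falsum) :=
    derivB_of_DC (DC.impList_intro l _ hd1)
  obtain ⟨t, ht⟩ := internalize hApp hd2
  have hmemΓ : Formula.just t (impList l Formula.falsum) ∈ Γ :=
    hM.memDeriv (DC.ofDerivB ht)
  obtain ⟨s', hs'⟩ := hM.peel l (fun B hB => hsub ((hmem B).mp hB)) Formula.falsum t hmemΓ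
  exact hM.1 ((DC.ax' (Ax.jd s' rfl)).mp' (DC.hyp hs'))

/-- Subformulas. -/
def subf : Formula → Finset Formula
  | .atom n => {Formula.atom n}
  | .neg B => insert (Formula.neg B) (subf B)
  | .impl B C => insert (B.impl C) (subf B ∪ subf C)
  | .just t B => insert (Formula.just t B) (subf B)

theorem mem_subf_self : ∀ A : Formula, A ∈ subf A := by
  intro A
  cases A <;> simp [subf]

theorem subf_trans : ∀ {C B : Formula}, B ∈ subf C → subf B ⊆ subf C := by
  intro C
  induction C with
  | atom n =>
    intro B h
    simp only [subf, Finset.mem_singleton] at h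
    subst h
    exact subset_rfl
  | neg C ih =>
    intro B h
    simp only [subf, Finset.mem_insert] at h
    rcases h with rfl | h
    · exact subset_rfl
    · exact (ih h).trans (Finset.subset_insert _ _)
  | impl C D ih1 ih2 =>
    intro B h
    simp only [subf, Finset.mem_insert, Finset.mem_union] at h
    rcases h with rfl | h | h
    · exact subset_rfl
    · exact (ih1 h).trans ((Finset.subset_union_left).trans (Finset.subset_insert _ _))
    · exact (ih2 h).trans ((Finset.subset_union_right).trans (Finset.subset_insert _ _))
  | just t C ih =>
    intro B h
    simp only [subf, Finset.mem_insert] at h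
    rcases h with rfl | h
    · exact subset_rfl
    · exact (ih h).trans (Finset.subset_insert _ _)

/-- Nesting depth of justification operators. -/
def depth : Formula → ℕ
  | .atom _ => 0
  | .neg B => depth B
  | .impl B C => max (depth B) (depth C)
  | .just _ B => depth B + 1

/-- The minimal admissible evidence relation generated by a base. -/
inductive Ev (CS : Set Formula) {W : Type} (base : Term → Formula → W → Prop) :
    Term → Formula → W → Prop
  | base {t : Term} {B : Formula} {w : W} : base t B w → Ev CS base t B w
  | sumL (s t : Term) (B : Formula) (w : W) :
      Ev CS base s B w → Ev CS base (Term.sum s t) B w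
  | sumR (s t : Term) (B : Formula) (w : W) :
      Ev CS base t B w → Ev CS base (Term.sum s t) B w
  | app (s t : Term) (B C : Formula) (w : W) :
      Ev CS base s (B.impl C) w → Ev CS base t B w → Ev CS base (Term.app s t) C w
  | an (c : ℕ) (B : Formula) (w : W) (n : ℕ) :
      Formula.just (Term.const c) B ∈ CS →
      Ev CS base (towerT (Term.const c) n) (towerF (Term.const c) B n) w


set_option linter.unusedVariables false in
/-- Completeness of `JD_CS` with respect to finitary models: if a formula is not
derivable in the Hilbert system `JD_CS` (with axiomatically appropriate constant specification `CS`),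
then it fails at some world of some finitary Fitting model for `JD_CS`. -/
theorem finitary_completeness_JD (CS : Set Formula) (hCS : ConstSpec AxJD CS) (hApp : AxApprop AxJD CS) (A : Formula)
    (hA : ¬ DerivB AxJD CS A) :
    ∃ M : Model, IsModelJD CS M ∧ FinitaryBang CS M ∧ ∃ w : M.World, ¬ Sat M A w := by
  classical
  -- the chain of maximal consistent sets
  have hcon0 : Con CS {A.neg} := by
    intro hd
    have h0 : ({A.neg} : Set Formula) = insert A.neg ∅ := by simp
    have h1 : DC CS ∅ (A.neg.impl Formula.falsum) := DC.deduction (h0 ▸ hd)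
    exact hA (derivB_of_DC (DC.ofNegImpFal h1))
  obtain ⟨Δ0, hsub0, hM0⟩ := lindenbaum hcon0
  have step : ∀ Γ : Set Formula, MCS CS Γ → ∃ Δ, sharp Γ ⊆ Δ ∧ MCS CS Δ :=
    fun Γ h => lindenbaum (sharp_con hApp h)
  choose g hg1 hg2 using step
  let f : ℕ → Set Formula := fun n =>
    Nat.rec Δ0 (fun _ Γ => if h : MCS CS Γ then g Γ h else Γ) n
  have hMf : ∀ n, MCS CS (f n) := by
    intro n
    induction n with
    | zero => exact hM0
    | succ n ih =>
      show MCS CS (if h : MCS CS (f n) then g (f n) h else f n)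
      rw [dif_pos ih]
      exact hg2 _ ih
  have hsharp : ∀ n, sharp (f n) ⊆ f (n + 1) := by
    intro n
    show sharp (f n) ⊆ (if h : MCS CS (f n) then g (f n) h else f n)
    rw [dif_pos (hMf n)]
    exact hg1 _ (hMf n)
  set d := depth A with hd
  -- the model
  let R : Fin (d + 1) → Fin (d + 1) → Prop := fun i j =>
    (i.val < d ∧ j.val = i.val + 1) ∨ (i.val = d ∧ j.val = d)
  let base : Term → Formula → Fin (d + 1) → Prop := fun t B w =>
    Formula.just t B ∈ subf A ∧ Formula.just t B ∈ f w.val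
  let M : Model :=
    { World := Fin (d + 1)
      nonempty := ⟨⟨0, Nat.succ_pos d⟩⟩
      R := R
      E := Ev CS base
      val := fun n w => Formula.atom n ∈ subf A ∧ Formula.atom n ∈ f w.val }
  -- evidence implies membership
  have evΓ : ∀ (t : Term) (B : Formula) (i : Fin (d + 1)), Ev CS base t B i →
      Formula.just t B ∈ f i.val := by
    intro t B i h
    induction h with
    | base hb => exact hb.2
    | sumL s t B w _ ih =>
      exact (hMf w.val).memDeriv ((DC.ax' (Ax.a3 s t B)).mp' (DC.orL (DC.hyp ih)))
    | sumR s t B w _ ih =>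
      exact (hMf w.val).memDeriv ((DC.ax' (Ax.a3 s t B)).mp' (DC.orR (DC.hyp ih)))
    | app s t B C w _ _ ih1 ih2 =>
      exact (hMf w.val).memDeriv (((DC.ax' (Ax.a2 s t B C)).mp' (DC.hyp ih1)).mp' (DC.hyp ih2))
    | an c B w n hc =>
      exact (hMf w.val).memDeriv (DC.ofDerivB (DerivB.an c B n hc))
  -- truth lemma
  have truth : ∀ (B : Formula) (i : Fin (d + 1)),
      B ∈ subf A → depth B + i.val ≤ d → (Sat M B i ↔ B ∈ f i.val) := by
    intro B
    induction B with
    | atom n =>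
      intro i hs _
      show (Formula.atom n ∈ subf A ∧ Formula.atom n ∈ f i.val) ↔ _
      exact ⟨fun h => h.2, fun h => ⟨hs, h⟩⟩
    | neg B ih =>
      intro i hs hdep
      have hB : B ∈ subf A := subf_trans hs (Finset.mem_insert_of_mem (mem_subf_self B))
      have hdB : depth B + i.val ≤ d := hdep
      show (¬ Sat M B i) ↔ _
      rw [ih i hB hdB]
      exact ((hMf i.val).neg_mem B).symm
    | impl B C ih1 ih2 =>
      intro i hs hdep
      simp only [depth] at hdep
      have hB : B ∈ subf A := subf_trans hs
        (Finset.mem_insert_of_mem (Finset.mem_union_left _ (mem_subf_self B)))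
      have hC : C ∈ subf A := subf_trans hs
        (Finset.mem_insert_of_mem (Finset.mem_union_right _ (mem_subf_self C)))
      have h1 : depth B + i.val ≤ d :=
        le_trans (Nat.add_le_add_right (le_max_left _ _) _) hdep
      have h2 : depth C + i.val ≤ d :=
        le_trans (Nat.add_le_add_right (le_max_right _ _) _) hdep
      show (Sat M B i → Sat M C i) ↔ _
      rw [ih1 i hB h1, ih2 i hC h2]
      exact ((hMf i.val).impl_mem B C).symm
    | just t B ih =>
      intro i hs hdep
      simp only [depth] at hdep
      have hiv : i.val < d := by omega
      have hB : B ∈ subf A := subf_trans hs (Finset.mem_insert_of_mem (mem_subf_self B))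
      show (M.E t B i ∧ ∀ v : Fin (d + 1), M.R i v → Sat M B v) ↔ _
      constructor
      · rintro ⟨hE, _⟩
        exact evΓ t B i hE
      · intro hmem
        refine ⟨Ev.base ⟨hs, hmem⟩, ?_⟩
        intro v hv
        have hv2 : (i.val < d ∧ v.val = i.val + 1) ∨ (i.val = d ∧ v.val = d) := hv
        have hv' : v.val = i.val + 1 := by
          rcases hv2 with ⟨_, h⟩ | ⟨h, _⟩
          · exact h
          · omega
        have hBv : B ∈ f v.val := by
          rw [hv']
          exact hsharp i.val ⟨t, hmem⟩
        exact (ih v hB (by omega)).mpr hBv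
  refine ⟨M, ⟨?_, ?_, ?_, ?_⟩, ⟨?_, ?_, ?_⟩, ⟨0, Nat.succ_pos d⟩, ?_⟩
  -- seriality
  · intro i
    by_cases hiv : i.val < d
    · exact ⟨⟨i.val + 1, by omega⟩, Or.inl ⟨hiv, rfl⟩⟩
    · have : i.val = d := by omega
      exact ⟨⟨d, by omega⟩, Or.inr ⟨this, rfl⟩⟩
  -- admissibility
  · intro s t B w h
    rcases h with h | h
    · exact Ev.sumL s t B w h
    · exact Ev.sumR s t B w h
  · intro s t B C w h1 h2
    exact Ev.app s t B C w h1 h2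
  · intro c B w n hc
    exact Ev.an c B w n hc
  -- finitary: finitely many worlds
  · exact inferInstanceAs (Finite (Fin (d + 1)))
  -- finitary: finite base for the minimal evidence relation
  · refine ⟨{x : Term × Formula × Fin (d + 1) | base x.1 x.2.1 x.2.2}, ?_, ?_, ?_⟩
    · have hginj : Function.Injective
          (fun x : Term × Formula × Fin (d + 1) => (Formula.just x.1 x.2.1, x.2.2)) := by
        rintro ⟨x1, x2, x3⟩ ⟨y1, y2, y3⟩ h
        simp only [Prod.mk.injEq, Formula.just.injEq] at h
        obtain ⟨⟨h1, h2⟩, h3⟩ := h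
        simp [h1, h2, h3]
      refine Set.Finite.subset
        (Set.Finite.preimage hginj.injOn
          (((subf A).finite_toSet).prod Set.finite_univ)) ?_
      intro x hx
      exact ⟨hx.1, Set.mem_univ _⟩
    · intro x hx
      exact Ev.base hx
    · intro E' hE' hBsub x hx
      have key : ∀ (t : Term) (B : Formula) (w : Fin (d + 1)), Ev CS base t B w →
          (t, B, w) ∈ E' := by
        intro t B w h
        induction h with
        | base hb => exact hBsub hb
        | sumL s t B w _ ih => exact hE'.1 s t B w (Or.inl ih)
        | sumR s t B w _ ih => exact hE'.1 s t B w (Or.inr ih)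
        | app s t B C w _ _ ih1 ih2 => exact hE'.2.1 s t B C w ih1 ih2
        | an c B w n hc => exact hE'.2.2 c B w n hc
      exact key x.1 x.2.1 x.2.2 hx
  -- finitary: finite valuation graph
  · have hatominj : Function.Injective Formula.atom := by
      intro a b h
      injection h
    refine Set.Finite.subset
      ((Set.finite_univ (α := Fin (d + 1))).prod
        (Set.Finite.preimage hatominj.injOn ((subf A).finite_toSet))) ?_
    intro p hp
    exact ⟨Set.mem_univ _, hp.1⟩
  -- the falsifying world
  · have hAneg : A.neg ∈ f 0 := hsub0 (Set.mem_singleton _)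
    have hAnot : A ∉ f 0 := ((hMf 0).neg_mem A).mp hAneg
    intro hSat
    exact hAnot ((truth A ⟨0, Nat.succ_pos d⟩ (mem_subf_self A) (by simp [hd])).mp hSat)


end JustificationLogic
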